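/- Let m be an odd integer and let (d, v) ∈ ℤ² with d > 0. Then there is NO decomposition (d, v) = (d₁, v₁) + (d₂, v₂) in ℤ² with d₁, d₂ > 0 satisfying w₁/d₁ = w₂/d₂, where w₁ := v₁ − (m/2)·d₁·d₂ and w₂ := v₂ + (m/2)·d₁·d₂, if and only if either (gcd(d, v) = 1 and d ≢ 2 (mod 4)) or (gcd(d, v) = 2 and d ≡ 2 (mod 4)). -/

import Mathlib

private lemma dvd_eq_helper {c x : ℤ} (hc : 0 < c) (h : c ∣ x) (hx : 0 < x)
    (h2 : x < 2 * c) : x = c := by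
  obtain ⟨t, rfl⟩ := h
  have h3 : 0 < t := by nlinarith
  have h4 : t < 2 := by nlinarith
  have ht : t = 1 := by omega
  rw [ht, mul_one]

private lemma consA (m d v e : ℤ) (hd : 0 < d) (he3 : 3 ≤ e) (hed : e ∣ d) (hev : e ∣ v) :
    ∃ d₁ k : ℤ, 0 < d₁ ∧ d₁ < d ∧ d₁ * (2*v + m*d*(d-d₁)) = 2*d*k := by
  obtain ⟨d', rfl⟩ := hed
  obtain ⟨v', rfl⟩ := hev
  have hd' : 0 < d' := by nlinarith
  exact ⟨2*d', 2*v' + m*d'*(e*d' - 2*d'), by omega, by nlinarith, by ring⟩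

private lemma consB (m d v : ℤ) (hd : 0 < d) (h4 : 4 ∣ d) (h2 : 2 ∣ v) :
    ∃ d₁ k : ℤ, 0 < d₁ ∧ d₁ < d ∧ d₁ * (2*v + m*d*(d-d₁)) = 2*d*k := by
  obtain ⟨c, rfl⟩ := h4
  obtain ⟨w, rfl⟩ := h2
  have hc : 0 < c := by omega
  exact ⟨2*c, w + 2*m*c*c, by omega, by omega, by ring⟩

private lemma consC (m d v : ℤ) (hm : Odd m) (hd : 0 < d) (hd2 : d % 4 = 2)
    (hv : ¬ (2:ℤ) ∣ v) :
    ∃ d₁ k : ℤ, 0 < d₁ ∧ d₁ < d ∧ d₁ * (2*v + m*d*(d-d₁)) = 2*d*k := by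
  obtain ⟨c, rfl⟩ : ∃ c, d = 2*c := ⟨d/2, by omega⟩
  have hc : 0 < c := by omega
  have hco : Odd c := Int.odd_iff.mpr (by omega)
  have hvo : Odd v := Int.odd_iff.mpr (by omega)
  have heven : Even (v + m*c*c) := hvo.add_odd ((hm.mul hco).mul hco)
  obtain ⟨s, hs⟩ := heven
  exact ⟨c, s, hc, by omega, by linear_combination (2*c) * hs⟩

private lemma pow2_or_odd_factor (g : ℕ) (hg0 : g ≠ 0) :
    (∃ k, g = 2^k) ∨ ∃ e : ℕ, 3 ≤ e ∧ e ∣ g ∧ ¬ 2 ∣ e := by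
  by_cases h1 : ordCompl[2] g = 1
  · left
    refine ⟨g.factorization 2, ?_⟩
    have h := Nat.ordProj_mul_ordCompl_eq_self g 2
    rw [h1, mul_one] at h
    omega
  · right
    have hene : ¬ 2 ∣ ordCompl[2] g := Nat.not_dvd_ordCompl Nat.prime_two hg0
    have hepos : 0 < ordCompl[2] g := Nat.ordCompl_pos 2 hg0
    exact ⟨_, by omega, Nat.ordCompl_dvd g 2, hene⟩

/-- Lemma 6.6: for odd `m` and `(d, v) ∈ ℤ²` with `d > 0`, there is no decomposition
`(d, v) = (d₁, v₁) + (d₂, v₂)` with `d₁, d₂ > 0` and `w₁/d₁ = w₂/d₂`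
(where `w₁ = v₁ - m d₁ d₂ / 2`, `w₂ = v₂ + m d₁ d₂ / 2` in `ℚ`) iff
either `gcd(d,v) = 1` and `d ≢ 2 (mod 4)`, or `gcd(d,v) = 2` and `d ≡ 2 (mod 4)`. -/
theorem no_decomposition_iff (m d v : ℤ) (hm : Odd m) (hd : 0 < d) :
    (¬ ∃ d₁ d₂ v₁ v₂ : ℤ, 0 < d₁ ∧ 0 < d₂ ∧ d₁ + d₂ = d ∧ v₁ + v₂ = v ∧
        ((v₁ : ℚ) - (m : ℚ) * d₁ * d₂ / 2) / d₁ = ((v₂ : ℚ) + (m : ℚ) * d₁ * d₂ / 2) / d₂) ↔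
      ((Int.gcd d v = 1 ∧ d % 4 ≠ 2) ∨ (Int.gcd d v = 2 ∧ d % 4 = 2)) := by
  have hP : (∃ d₁ d₂ v₁ v₂ : ℤ, 0 < d₁ ∧ 0 < d₂ ∧ d₁ + d₂ = d ∧ v₁ + v₂ = v ∧
        ((v₁ : ℚ) - (m : ℚ) * d₁ * d₂ / 2) / d₁ = ((v₂ : ℚ) + (m : ℚ) * d₁ * d₂ / 2) / d₂) ↔
      (∃ d₁ k : ℤ, 0 < d₁ ∧ d₁ < d ∧ d₁ * (2*v + m*d*(d-d₁)) = 2*d*k) := by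
    constructor
    · rintro ⟨d₁, d₂, v₁, v₂, h1, h2, h3, h4, hQ⟩
      obtain rfl : d₂ = d - d₁ := by omega
      obtain rfl : v₂ = v - v₁ := by omega
      refine ⟨d₁, v₁, h1, by omega, ?_⟩
      have hd₁ : (d₁:ℚ) ≠ 0 := Int.cast_ne_zero.mpr h1.ne'
      have hd₂ : ((d - d₁ : ℤ):ℚ) ≠ 0 := Int.cast_ne_zero.mpr (by omega)
      rw [div_eq_div_iff hd₁ hd₂] at hQ
      have key : ((d₁ * (2*v + m*d*(d-d₁)) : ℤ) : ℚ) = ((2*d*v₁ : ℤ) : ℚ) := by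
        push_cast at hQ ⊢
        linear_combination (-2 : ℚ) * hQ
      exact_mod_cast key
    · rintro ⟨d₁, k, h1, h2, he⟩
      refine ⟨d₁, d - d₁, k, v - k, h1, by omega, by ring, by ring, ?_⟩
      have hd₁ : (d₁:ℚ) ≠ 0 := Int.cast_ne_zero.mpr h1.ne'
      have hd₂ : ((d - d₁ : ℤ):ℚ) ≠ 0 := Int.cast_ne_zero.mpr (by omega)
      rw [div_eq_div_iff hd₁ hd₂]
      have he' : (d₁:ℚ) * (2*(v:ℚ) + (m:ℚ)*(d:ℚ)*((d:ℚ)-(d₁:ℚ))) = 2*(d:ℚ)*(k:ℚ) := by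
        exact_mod_cast he
      push_cast
      linear_combination (-(1:ℚ)/2) * he'
  rw [hP]
  have hyes : ¬ ((Int.gcd d v = 1 ∧ d % 4 ≠ 2) ∨ (Int.gcd d v = 2 ∧ d % 4 = 2)) →
      ∃ d₁ k : ℤ, 0 < d₁ ∧ d₁ < d ∧ d₁ * (2*v + m*d*(d-d₁)) = 2*d*k := by
    intro hR
    have hR1 : ¬(Int.gcd d v = 1 ∧ d % 4 ≠ 2) := fun h => hR (Or.inl h)
    have hR2 : ¬(Int.gcd d v = 2 ∧ d % 4 = 2) := fun h => hR (Or.inr h)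
    have hg0 : Int.gcd d v ≠ 0 := by
      intro h
      have := Int.gcd_eq_zero_iff.mp h
      omega
    have hgd : (Int.gcd d v : ℤ) ∣ d := Int.gcd_dvd_left d v
    have hgv : (Int.gcd d v : ℤ) ∣ v := Int.gcd_dvd_right d v
    by_cases h42 : d % 4 = 2
    · have hg2 : Int.gcd d v ≠ 2 := fun h => hR2 ⟨h, h42⟩
      by_cases hv2 : (2:ℤ) ∣ v
      · have h2d : (2:ℤ) ∣ d := by omega
        have h2g : 2 ∣ Int.gcd d v := by
          have := Int.dvd_gcd h2d hv2
          exact_mod_cast this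
        rcases pow2_or_odd_factor (Int.gcd d v) hg0 with ⟨k, hk⟩ | ⟨e, he3, heg, heo⟩
        · by_cases hk0 : k = 0
          · rw [hk0, pow_zero] at hk
            omega
          · by_cases hk1 : k = 1
            · rw [hk1, pow_one] at hk
              exact absurd hk hg2
            · have h4g : (4:ℕ) ∣ Int.gcd d v := by
                rw [hk]
                have : (2:ℕ)^2 ∣ 2^k := pow_dvd_pow 2 (by omega)
                simpa using this
              have h4d : (4:ℤ) ∣ d := by
                have := (Int.natCast_dvd_natCast.mpr h4g).trans hgd
                exact_mod_cast this
              omega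
        · have hedvd : (e:ℤ) ∣ (Int.gcd d v : ℤ) := Int.natCast_dvd_natCast.mpr heg
          exact consA m d v e hd (by exact_mod_cast he3) (hedvd.trans hgd) (hedvd.trans hgv)
      · exact consC m d v hm hd h42 hv2
    · have hg1 : Int.gcd d v ≠ 1 := fun h => hR1 ⟨h, h42⟩
      rcases pow2_or_odd_factor (Int.gcd d v) hg0 with ⟨k, hk⟩ | ⟨e, he3, heg, heo⟩
      · by_cases hk0 : k = 0
        · rw [hk0, pow_zero] at hk
          exact absurd hk hg1
        · have h2g : (2:ℕ) ∣ Int.gcd d v := by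
            rw [hk]
            exact dvd_pow_self 2 hk0
          have h2d : (2:ℤ) ∣ d := by
            have := (Int.natCast_dvd_natCast.mpr h2g).trans hgd
            exact_mod_cast this
          have h2v : (2:ℤ) ∣ v := by
            have := (Int.natCast_dvd_natCast.mpr h2g).trans hgv
            exact_mod_cast this
          exact consB m d v hd (by omega) h2v
      · have hedvd : (e:ℤ) ∣ (Int.gcd d v : ℤ) := Int.natCast_dvd_natCast.mpr heg
        exact consA m d v e hd (by exact_mod_cast he3) (hedvd.trans hgd) (hedvd.trans hgv)
  constructor
  · intro hnp
    by_contra hR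
    exact hnp (hyes hR)
  · rintro hR ⟨d₁, k, h1, h2, he⟩
    have hdvd : d ∣ 2*d₁*v := ⟨2*k - m*d₁*(d-d₁), by linear_combination he⟩
    rcases hR with ⟨hg, h4⟩ | ⟨hg, h4⟩
    · -- gcd = 1, d % 4 ≠ 2
      have hco : IsCoprime d v := Int.isCoprime_iff_gcd_eq_one.mpr hg
      have hdvd21 : d ∣ 2*d₁ := hco.dvd_of_dvd_mul_right hdvd
      by_cases h2d : (2:ℤ) ∣ d
      · -- 4 ∣ d, v odd
        have hvo : ¬ (2:ℤ) ∣ v := by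
          intro hv
          have h2g := Int.dvd_gcd h2d hv
          rw [hg] at h2g
          norm_num at h2g
        obtain ⟨c', hc'⟩ : (4:ℤ) ∣ d := by omega
        obtain ⟨t, ht⟩ := hdvd21
        rw [hc'] at ht
        have hd1 : d₁ = 2*c'*t := by
          have h' : 2*d₁ = 2*(2*c'*t) := by linear_combination ht
          exact mul_left_cancel₀ two_ne_zero h'
        have hc'pos : 0 < c' := by omega
        have hd1c : d₁ = 2*c' :=
          dvd_eq_helper (by omega) ⟨t, hd1⟩ h1 (by omega)
        rw [hd1c, hc'] at he
        have h5 : (4*c')*(v + 4*(m*c'*c')) = (4*c')*(2*k) := by linear_combination he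
        have key : v + 4*(m*c'*c') = 2*k :=
          mul_left_cancel₀ (by positivity) h5
        exact hvo ⟨k - 2*(m*c'*c'), by linear_combination key⟩
      · -- d odd
        have hdo : Odd d := Int.odd_iff.mpr (by omega)
        obtain ⟨t, ht⟩ := hdvd21
        rcases Int.even_or_odd t with hte | hto
        · obtain ⟨s, hsst⟩ := hte
          rw [hsst] at ht
          have hd1 : d₁ = d*s := by
            have h' : 2*d₁ = 2*(d*s) := by linear_combination ht
            exact mul_left_cancel₀ two_ne_zero h'
          have : d ≤ d₁ := Int.le_of_dvd h1 ⟨s, hd1⟩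
          omega
        · have hodd : Odd (d*t) := hdo.mul hto
          rw [← ht] at hodd
          exact (Int.not_odd_iff_even.mpr (even_two_mul _)) hodd
    · -- gcd = 2, d % 4 = 2
      have hv2 : (2:ℤ) ∣ v := by
        have h := Int.gcd_dvd_right (a := d) (b := v)
        rw [hg] at h
        exact_mod_cast h
      obtain ⟨c, hc⟩ : ∃ c, d = 2*c := ⟨d/2, by omega⟩
      obtain ⟨w, hw⟩ := hv2
      have hcodd : ¬ (2:ℤ) ∣ c := by omega
      have hgcw : Int.gcd c w = 1 := by
        have h := Int.gcd_mul_left 2 c w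
        rw [← hc, ← hw, hg] at h
        have h2 : (2:ℤ).natAbs = 2 := rfl
        rw [h2] at h
        omega
      have hcw : IsCoprime c w := Int.isCoprime_iff_gcd_eq_one.mpr hgcw
      subst hc
      subst hw
      have hcpos : 0 < c := by omega
      have h6 : d₁*(2*w + m*c*(2*c - d₁)) = 2*c*k := by
        have h' : 2*(d₁*(2*w + m*c*(2*c - d₁))) = 2*(2*c*k) := by linear_combination he
        exact mul_left_cancel₀ two_ne_zero h'
      have ccdvd : c ∣ 2*(d₁*w) := ⟨2*k - m*d₁*(2*c - d₁), by linear_combination h6⟩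
      obtain ⟨t, ht⟩ := ccdvd
      have hcoddO : Odd c := Int.odd_iff.mpr (by omega)
      rcases Int.even_or_odd t with hte | hto
      · obtain ⟨s, hsst⟩ := hte
        rw [hsst] at ht
        have hdw : d₁*w = c*s := by
          have h' : 2*(d₁*w) = 2*(c*s) := by linear_combination ht
          exact mul_left_cancel₀ two_ne_zero h'
        have hcd1 : c ∣ d₁ := hcw.dvd_of_dvd_mul_right ⟨s, hdw⟩
        have hd1c : d₁ = c := dvd_eq_helper hcpos hcd1 h1 (by omega)
        rw [hd1c] at h6
        have h8 : c*(2*w + m*c*c) = c*(2*k) := by linear_combination h6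
        have key : 2*w + m*c*c = 2*k := mul_left_cancel₀ hcpos.ne' h8
        obtain ⟨j, hj⟩ := (hm.mul hcoddO).mul hcoddO
        rw [hj] at key
        omega
      · have hodd : Odd (c*t) := hcoddO.mul hto
        rw [← ht] at hodd
        exact (Int.not_odd_iff_even.mpr (even_two_mul _)) hodd
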